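/- Let G be a finite simple graph on [n] = {1,…,n} with no isolated vertices whose edge ideal I(G) ⊆ K[x_1,…,x_n] is a matroidal ideal (squarefree polymatroidal, generated in degree 2). Then (1,2,…,n is a perfect elimination order of G^c, so HS_k(I(G)) is defined, and) for every k ≥ 0 the k-th homological shift ideal HS_k(I(G)) is a matroidal ideal generated in degree k+2. -/

import Mathlib

open MvPolynomial

/-- The natural ordering `1, 2, …, n` of the vertices is a perfect elimination order of
`H`: for each vertex, its neighbourhood among the later vertices is a clique. -/
def natPEO {n : ℕ} (H : SimpleGraph (Fin n)) : Prop :=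
  ∀ i j k : Fin n, i < j → i < k → j ≠ k → H.Adj i j → H.Adj i k → H.Adj j k

/-- The reversed ordering `n, n-1, …, 1` of the vertices is a perfect elimination order of
`H`: for each vertex, its neighbourhood among the earlier-labelled vertices is a clique. -/
def revPEO {n : ℕ} (H : SimpleGraph (Fin n)) : Prop :=
  ∀ i j k : Fin n, j < i → k < i → j ≠ k → H.Adj i j → H.Adj i k → H.Adj j k
/-- The polymatroidal exchange property for a set `Gens` of monomials (the minimal
monomial generators of an equigenerated monomial ideal): for all `u, v ∈ Gens` and every
`i` with `deg_{x_i}(u) > deg_{x_i}(v)` there is `j` with `deg_{x_j}(u) < deg_{x_j}(v)`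
such that `x_j · (u / x_i) ∈ Gens` (equivalently, `x_i · w = x_j · u` for some
`w ∈ Gens`). -/
def ExchangeProperty {K : Type*} [Field K] {n : ℕ}
    (Gens : Set (MvPolynomial (Fin n) K)) : Prop :=
  ∀ u ∈ Gens, ∀ v ∈ Gens, ∀ i : Fin n,
    MvPolynomial.degreeOf i v < MvPolynomial.degreeOf i u →
      ∃ j : Fin n, MvPolynomial.degreeOf j u < MvPolynomial.degreeOf j v ∧
        ∃ w ∈ Gens, MvPolynomial.X i * w = MvPolynomial.X j * u
/-- The minimal monomial generating set of the edge ideal `I(G)`:  the monomials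
`x_i x_j` with `{i,j}` an edge of `G`. -/
def edgeGens (K : Type*) [Field K] {n : ℕ} (G : SimpleGraph (Fin n)) :
    Set (MvPolynomial (Fin n) K) :=
  {w | ∃ i j : Fin n, G.Adj i j ∧ w = MvPolynomial.X i * MvPolynomial.X j}
/-- The generating monomials of the `k`-th homological shift ideal `HS_k(I(G))`:
all monomials `x_A x_B` with `A, B` nonempty, `max A < min B`, `|A ∪ B| = k + 2` and
`{max A, b} ∈ E(G)` for all `b ∈ B`. -/
def HSgens (K : Type*) [Field K] {n : ℕ} (G : SimpleGraph (Fin n)) (k : ℕ) :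
    Set (MvPolynomial (Fin n) K) :=
  {w | ∃ A B : Finset (Fin n), A.Nonempty ∧ B.Nonempty ∧
    (∀ a ∈ A, ∀ b ∈ B, a < b) ∧ (A ∪ B).card = k + 2 ∧
    (∃ a0 ∈ A, (∀ a ∈ A, a ≤ a0) ∧ ∀ b ∈ B, G.Adj a0 b) ∧
    w = (∏ i ∈ A, MvPolynomial.X i) * ∏ i ∈ B, MvPolynomial.X i}

namespace HSaux

variable {K : Type*} [Field K] {n : ℕ}

lemma X_eq_mono (a : Fin n) : (X a : MvPolynomial (Fin n) K) = monomial (Finsupp.single a 1) 1 := rfl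

lemma XmulX (a b : Fin n) :
    (X a * X b : MvPolynomial (Fin n) K) =
      monomial (Finsupp.single a 1 + Finsupp.single b 1) 1 := by
  rw [X_eq_mono, X_eq_mono, monomial_mul, one_mul]

lemma prodX_eq (S : Finset (Fin n)) :
    (∏ i ∈ S, (X i : MvPolynomial (Fin n) K)) =
      monomial (∑ i ∈ S, Finsupp.single i 1) 1 := by
  classical
  induction S using Finset.induction with
  | empty => simp
  | @insert a s hx ih =>
      rw [Finset.prod_insert hx, Finset.sum_insert hx, ih, X_eq_mono, monomial_mul, one_mul]

lemma expS_apply (S : Finset (Fin n)) (j : Fin n) :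
    (∑ i ∈ S, Finsupp.single i (1:ℕ)) j = if j ∈ S then 1 else 0 := by
  classical
  rw [Finsupp.finset_sum_apply]
  simp [Finsupp.single_apply, Finset.sum_ite_eq' S j (fun _ => 1)]

lemma degreeOf_prodX (S : Finset (Fin n)) (j : Fin n) :
    degreeOf j (∏ i ∈ S, (X i : MvPolynomial (Fin n) K)) = if j ∈ S then 1 else 0 := by
  rw [prodX_eq, degreeOf_monomial_eq _ _ (one_ne_zero), expS_apply]

lemma totalDegree_prodX (S : Finset (Fin n)) :
    (∏ i ∈ S, (X i : MvPolynomial (Fin n) K)).totalDegree = S.card := by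
  classical
  rw [prodX_eq, totalDegree_monomial _ (one_ne_zero : (1:K) ≠ 0)]
  induction S using Finset.induction with
  | empty => simp
  | @insert a s hx ih =>
      rw [Finset.sum_insert hx, Finset.card_insert_of_notMem hx,
        Finsupp.sum_add_index (by simp) (by simp), ih, Finsupp.sum_single_index rfl]
      omega

lemma single_add_single {a b c d : Fin n}
    (h : Finsupp.single a (1:ℕ) + Finsupp.single b 1 = Finsupp.single c 1 + Finsupp.single d 1) :
    (a = c ∧ b = d) ∨ (a = d ∧ b = c) := by
  classical
  by_cases hac : a = c
  · subst hac
    exact Or.inl ⟨rfl, (Finsupp.single_left_inj one_ne_zero).mp (add_left_cancel h)⟩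
  · have ha := DFunLike.congr_fun h a
    simp only [Finsupp.add_apply, Finsupp.single_apply, if_pos rfl] at ha
    rw [if_neg (fun hc : c = a => hac hc.symm)] at ha
    by_cases hda : d = a
    · subst hda
      have h' : Finsupp.single b (1:ℕ) = Finsupp.single c 1 := by
        rw [add_comm (Finsupp.single d (1:ℕ)) (Finsupp.single b 1)] at h
        exact add_right_cancel h
      exact Or.inr ⟨rfl, (Finsupp.single_left_inj one_ne_zero).mp h'⟩
    · rw [if_neg hda] at ha
      split_ifs at ha <;> simp_all

lemma XX_inj {a b c d : Fin n}
    (h : (X a * X b : MvPolynomial (Fin n) K) = X c * X d) :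
    (a = c ∧ b = d) ∨ (a = d ∧ b = c) := by
  rw [XmulX, XmulX] at h
  exact single_add_single ((monomial_left_inj one_ne_zero).mp h)

lemma degreeOf_XX (a b j : Fin n) :
    degreeOf j (X a * X b : MvPolynomial (Fin n) K) =
      (if a = j then 1 else 0) + (if b = j then 1 else 0) := by
  rw [XmulX, degreeOf_monomial_eq _ _ (one_ne_zero)]
  simp [Finsupp.single_apply]

/-- Non-adjacency is transitive when the edge ideal is matroidal and there are no
isolated vertices: `G` is complete multipartite. -/
lemma ntrans (K : Type*) [Field K] {n : ℕ} (G : SimpleGraph (Fin n))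
    (hiso : ∀ v : Fin n, ∃ w : Fin n, G.Adj v w)
    (hmat : ExchangeProperty (edgeGens K G)) :
    ∀ i j k : Fin n, ¬G.Adj i j → ¬G.Adj j k → ¬G.Adj i k := by
  intro i j k hij hjk hik
  by_cases hik' : i = k
  · exact G.loopless.irrefl k (hik' ▸ hik)
  obtain ⟨m, hm⟩ := hiso j
  have hmi : m ≠ i := fun h => hij (h ▸ hm).symm
  have hmk : m ≠ k := fun h => hjk (h ▸ hm)
  have hu : (X j * X m : MvPolynomial (Fin n) K) ∈ edgeGens K G := ⟨j, m, hm, rfl⟩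
  have hv : (X i * X k : MvPolynomial (Fin n) K) ∈ edgeGens K G := ⟨i, k, hik, rfl⟩
  have hdeg : degreeOf m (X i * X k : MvPolynomial (Fin n) K) <
      degreeOf m (X j * X m : MvPolynomial (Fin n) K) := by
    rw [degreeOf_XX, degreeOf_XX, if_neg hmi.symm, if_neg hmk.symm, if_pos rfl]
    split_ifs <;> omega
  obtain ⟨l, hl, w, hw, hwe⟩ := hmat _ hu _ hv m hdeg
  rw [degreeOf_XX, degreeOf_XX] at hl
  have hrhs : (if i = l then 1 else 0) + (if k = l then (1:ℕ) else 0) ≤ 1 := by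
    by_cases h1 : i = l <;> by_cases h2 : k = l
    · exact absurd (h1.trans h2.symm) hik'
    all_goals simp [h1, h2]
  have hjl : j ≠ l := by
    intro h; rw [if_pos h] at hl; omega
  have hml : m ≠ l := by
    intro h; rw [if_pos h] at hl; omega
  have hlik : i = l ∨ k = l := by
    by_contra hc
    push_neg at hc
    rw [if_neg hc.1, if_neg hc.2] at hl
    omega
  obtain ⟨a, b, hab, rfl⟩ := hw
  have hcan : (X a * X b : MvPolynomial (Fin n) K) = X l * X j := by
    have h2 : (X m : MvPolynomial (Fin n) K) * (X a * X b) = X m * (X l * X j) := by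
      rw [hwe]; ring
    exact mul_left_cancel₀ (X_ne_zero m) h2
  have hlj : G.Adj l j := by
    rcases XX_inj hcan with ⟨h1, h2⟩ | ⟨h1, h2⟩
    · exact h1 ▸ h2 ▸ hab
    · exact (h1 ▸ h2 ▸ hab).symm
  rcases hlik with rfl | rfl
  · exact hij hlj
  · exact hjk hlj.symm

/-- membership in `HSgens` is equivalent to being the squarefree monomial of a set of
size `k+2` containing at least one edge. -/
lemma mem_HSgens_iff (G : SimpleGraph (Fin n))
    (htr : ∀ i j k : Fin n, ¬G.Adj i j → ¬G.Adj j k → ¬G.Adj i k)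
    (k : ℕ) (u : MvPolynomial (Fin n) K) :
    u ∈ HSgens K G k ↔ ∃ S : Finset (Fin n), S.card = k + 2 ∧
      (∃ a ∈ S, ∃ b ∈ S, G.Adj a b) ∧ u = ∏ i ∈ S, X i := by
  classical
  constructor
  · rintro ⟨A, B, hA, hB, hlt, hcard, ⟨a0, ha0A, ha0max, ha0adj⟩, rfl⟩
    refine ⟨A ∪ B, hcard, ?_, ?_⟩
    · obtain ⟨b, hb⟩ := hB
      exact ⟨a0, Finset.mem_union_left _ ha0A, b, Finset.mem_union_right _ hb, ha0adj b hb⟩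
    · rw [Finset.prod_union]
      rw [Finset.disjoint_left]
      intro x hxA hxB
      exact absurd (hlt x hxA x hxB) (lt_irrefl x)
  · rintro ⟨S, hcard, ⟨a, ha, b, hb, hab⟩, rfl⟩
    have hSne : S.Nonempty := ⟨a, ha⟩
    set smax := S.max' hSne with hsmax
    have hA0ne : ∃ s ∈ S, G.Adj s smax := by
      by_contra hc
      push_neg at hc
      have hsb : ¬ G.Adj smax b := fun h => hc b hb h.symm
      exact (htr a smax b (hc a ha) hsb) hab
    set A0 := S.filter (fun s => G.Adj s smax) with hA0
    have hA0ne' : A0.Nonempty := by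
      obtain ⟨s, hs, hadj⟩ := hA0ne
      exact ⟨s, Finset.mem_filter.mpr ⟨hs, hadj⟩⟩
    set t := A0.max' hA0ne' with ht
    have htA0 : t ∈ A0 := A0.max'_mem hA0ne'
    have htS : t ∈ S := (Finset.mem_filter.mp htA0).1
    have htadj : G.Adj t smax := (Finset.mem_filter.mp htA0).2
    have htlt : t < smax := lt_of_le_of_ne (S.le_max' t htS) htadj.ne
    refine ⟨S.filter (· ≤ t), S.filter (fun s => t < s), ⟨t, Finset.mem_filter.mpr ⟨htS, le_refl t⟩⟩,
      ⟨smax, Finset.mem_filter.mpr ⟨S.max'_mem hSne, htlt⟩⟩, ?_, ?_, ?_, ?_⟩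
    · intro x hx y hy
      exact lt_of_le_of_lt (Finset.mem_filter.mp hx).2 (Finset.mem_filter.mp hy).2
    · rw [show S.filter (· ≤ t) ∪ S.filter (fun s => t < s) = S by
        ext x
        simp only [Finset.mem_union, Finset.mem_filter]
        have := le_or_gt x t
        tauto]
      exact hcard
    · refine ⟨t, Finset.mem_filter.mpr ⟨htS, le_refl t⟩, fun x hx => (Finset.mem_filter.mp hx).2, ?_⟩
      intro x hx
      obtain ⟨hxS, htx⟩ := Finset.mem_filter.mp hx
      have hxA0 : x ∉ A0 := fun h => absurd (A0.le_max' x h) (not_le.mpr htx)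
      have hxsmax : ¬ G.Adj x smax := fun h => hxA0 (Finset.mem_filter.mpr ⟨hxS, h⟩)
      by_contra htx'
      exact (htr t x smax htx' hxsmax) htadj
    · rw [← Finset.prod_union (by
        rw [Finset.disjoint_left]
        intro x hx hx'
        exact absurd (Finset.mem_filter.mp hx).2 (not_le.mpr (Finset.mem_filter.mp hx').2))]
      congr 1
      ext x
      simp only [Finset.mem_union, Finset.mem_filter]
      have := le_or_gt x t
      tauto

end HSaux

open HSaux

theorem HS_k_matroidal_of_matroidal_degree_two
    {K : Type*} [Field K] {n : ℕ} (G : SimpleGraph (Fin n))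
    (hiso : ∀ v : Fin n, ∃ w : Fin n, G.Adj v w)
    (hmat : ExchangeProperty (edgeGens K G)) :
    natPEO Gᶜ ∧
    ∀ k : ℕ, ExchangeProperty (HSgens K G k) ∧
      ∀ u ∈ HSgens K G k, u.totalDegree = k + 2 := by
  classical
  have htr := ntrans K G hiso hmat
  constructor
  · intro i j k hij hik hjk haij haik
    rw [SimpleGraph.compl_adj] at haij haik ⊢
    refine ⟨hjk, ?_⟩
    have h1 : ¬ G.Adj j i := fun h => haij.2 h.symm
    exact htr j i k h1 haik.2
  intro k
  constructor
  · -- exchange property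
    intro u hu v hv i hdeg
    obtain ⟨S, hScard, hSadj, rfl⟩ := (mem_HSgens_iff G htr k u).mp hu
    obtain ⟨T, hTcard, hTadj, rfl⟩ := (mem_HSgens_iff G htr k v).mp hv
    rw [degreeOf_prodX, degreeOf_prodX] at hdeg
    have hiS : i ∈ S := by by_contra h; rw [if_neg h] at hdeg; omega
    have hiT : i ∉ T := by intro h; rw [if_pos h, if_pos hiS] at hdeg; omega
    have hTSne : (T \ S).Nonempty := by
      rw [Finset.sdiff_nonempty]
      intro hsub
      have := Finset.eq_of_subset_of_card_le hsub (by omega)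
      exact hiT (this ▸ hiS)
    have herase_ne : (S.erase i).Nonempty := by
      rw [← Finset.card_pos, Finset.card_erase_of_mem hiS]
      omega
    -- find j ∈ T \ S such that (S.erase i) ∪ {j} still contains an edge
    have hkey : ∃ j ∈ T \ S, ∃ p ∈ insert j (S.erase i), ∃ q ∈ insert j (S.erase i), G.Adj p q := by
      by_cases hem : ∃ p ∈ S.erase i, ∃ q ∈ S.erase i, G.Adj p q
      · obtain ⟨j, hj⟩ := hTSne
        obtain ⟨p, hp, q, hq, hpq⟩ := hem
        exact ⟨j, hj, p, Finset.mem_insert_of_mem hp, q, Finset.mem_insert_of_mem hq, hpq⟩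
      · push_neg at hem
        by_cases hjs : ∃ j ∈ T \ S, ∃ s ∈ S.erase i, G.Adj j s
        · obtain ⟨j, hj, s, hs, hjs'⟩ := hjs
          exact ⟨j, hj, j, Finset.mem_insert_self _ _, s, Finset.mem_insert_of_mem hs, hjs'⟩
        · exfalso
          push_neg at hjs
          obtain ⟨s0, hs0⟩ := herase_ne
          have hall : ∀ x ∈ T, ¬ G.Adj x s0 := by
            intro x hx
            by_cases hxS : x ∈ S
            · have hxe : x ∈ S.erase i := Finset.mem_erase.mpr ⟨fun h => hiT (h ▸ hx), hxS⟩
              exact hem x hxe s0 hs0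
            · exact hjs x (Finset.mem_sdiff.mpr ⟨hx, hxS⟩) s0 hs0
          obtain ⟨a, ha, b, hb, hab⟩ := hTadj
          exact (htr a s0 b (hall a ha) (fun h => hall b hb h.symm)) hab
    obtain ⟨j, hjTS, hedge⟩ := hkey
    obtain ⟨hjT, hjS⟩ := Finset.mem_sdiff.mp hjTS
    have hjerase : j ∉ S.erase i := fun h => hjS (Finset.mem_of_mem_erase h)
    refine ⟨j, ?_, ∏ x ∈ insert j (S.erase i), X x, ?_, ?_⟩
    · rw [degreeOf_prodX, degreeOf_prodX, if_neg hjS, if_pos hjT]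
      omega
    · refine (mem_HSgens_iff G htr k _).mpr ⟨insert j (S.erase i), ?_, hedge, rfl⟩
      rw [Finset.card_insert_of_notMem hjerase, Finset.card_erase_of_mem hiS, hScard]
      omega
    · rw [Finset.prod_insert hjerase, ← Finset.mul_prod_erase S _ hiS]
      ring
  · -- total degree
    intro u hu
    obtain ⟨S, hScard, _, rfl⟩ := (mem_HSgens_iff G htr k u).mp hu
    rw [totalDegree_prodX, hScard]
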